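/- Let z, z' ∈ Ĥ with continued fraction data (f_i, z_i) and (g_i, z'_i) respectively. Suppose z_m is defined and ν(z - z') > 2·Σ_{i=1}^{m} deg(f_i). Then z'_m is defined and f_i = g_i for all i ≤ m. -/

import Mathlib

universe u

/-- Evaluation of a finite continued fraction `[f₀, f₁, …, f_N]` in a field,
`cfEval [a] = a`, `cfEval (a :: l) = a + (cfEval l)⁻¹` (with the convention `0⁻¹ = 0`). -/
def cfEval {L : Type u} [Field L] : List L → L
  | [] => 0
  | a :: l => a + (cfEval l)⁻¹

/-- The Moebius maps `ρ_n = σ_n ∘ ⋯ ∘ σ_0`, where `σ_i x = (x - f_i)⁻¹`. -/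
def rho {L : Type u} [Field L] (f : ℕ → L) : ℕ → L → L
  | 0, x => (x - f 0)⁻¹
  | n + 1, x => (rho f n x - f (n + 1))⁻¹

/-- The derivative `ρ_n'` of `ρ_n`, computed by the chain rule from
`σ_i'(x) = -((x - f_i)⁻¹)²`. -/
def rho' {L : Type u} [Field L] (f : ℕ → L) : ℕ → L → L
  | 0, x => -((x - f 0)⁻¹) ^ 2
  | n + 1, x => -((rho f n x - f (n + 1))⁻¹) ^ 2 * rho' f n x

/-- An abstract presentation of the completion `K̂` of the Puiseux field
`E⟨⟨t⁻¹⟩⟩` over a field `E`.  The field `K` carries an additive valuation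
`ν` with values in `ℚ` on nonzero elements (normalized by `ν (t^r) = -r`,
where `mono r` plays the role of the monomial `t^r`), the subfield `E` is
embedded via `emb`, the simple "Laurent Puiseux polynomials" (the ring
generated by `E` and all rational powers of `t`) are dense, and `K` is
complete for `ν`. -/
structure PuiseuxCompletion (E : Type u) [Field E] where
  K : Type u
  [fieldK : Field K]
  ν : K → ℚ
  emb : E →+* K
  mono : ℚ → K
  mono_zero : mono 0 = 1
  mono_mul : ∀ r s : ℚ, mono r * mono s = mono (r + s)
  ν_mono : ∀ r : ℚ, ν (mono r) = -r
  ν_emb : ∀ e : E, e ≠ 0 → ν (emb e) = 0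
  ν_mul : ∀ x y : K, x ≠ 0 → y ≠ 0 → ν (x * y) = ν x + ν y
  ν_add : ∀ x y : K, x ≠ 0 → y ≠ 0 → x + y ≠ 0 → min (ν x) (ν y) ≤ ν (x + y)
  dense' : ∀ z : K, ∀ C : ℚ,
    ∃ f ∈ Subring.closure (Set.range emb ∪ Set.range mono), z = f ∨ C < ν (z - f)
  complete' : ∀ uSeq : ℕ → K,
    (∀ C : ℚ, ∃ N : ℕ, ∀ m ≥ N, ∀ n ≥ N, uSeq m = uSeq n ∨ C < ν (uSeq m - uSeq n)) →
    ∃ z : K, ∀ C : ℚ, ∃ N : ℕ, ∀ n ≥ N, uSeq n = z ∨ C < ν (uSeq n - z)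

attribute [instance] PuiseuxCompletion.fieldK

namespace PuiseuxCompletion

variable {E : Type u} [Field E] (P : PuiseuxCompletion E)

/-- The ring `Ā = E⟨t⟩` of Puiseux polynomials: finite `E`-linear combinations of
nonnegative rational powers of `t`. -/
def Abar : Subring P.K :=
  Subring.closure (Set.range P.emb ∪ P.mono '' {r : ℚ | 0 ≤ r})

/-- `deg f = -ν f`. -/
def deg (f : P.K) : ℚ := -P.ν f

/-- The rational Puiseux field `k̃ = Quot(Ā) = ⋃ₙ E(t^{1/n})`, as a subfield of `K̂`. -/
def ktilde : Subfield P.K := Subfield.closure (P.Abar : Set P.K)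

/-- `uSeq n → z` with respect to the valuation `ν`. -/
def TendsTo (uSeq : ℕ → P.K) (z : P.K) : Prop :=
  ∀ C : ℚ, ∃ N : ℕ, ∀ n ≥ N, uSeq n = z ∨ C < P.ν (uSeq n - z)

/-- One step of the continued fraction algorithm succeeds at index `i`:
`f i` is the Puiseux polynomial with `ν (z_i - f i) > 0`, the fraction does not
end at `i` (`z_i ≠ f i`), and `z_{i+1} = (z_i - f i)⁻¹`. -/
def CFStep (f zs : ℕ → P.K) (i : ℕ) : Prop :=
  f i ∈ P.Abar ∧ 0 < P.ν (zs i - f i) ∧ zs i ≠ f i ∧ zs (i + 1) = (zs i - f i)⁻¹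

/-- The `n`-th approximant `x_n = [f₀, …, f_n]_{ev}`. -/
def approx (f : ℕ → P.K) (n : ℕ) : P.K :=
  cfEval (List.ofFn fun i : Fin (n + 1) => f i)

/-- The continued fraction of `z` begins with the coefficients `f 0, …, f n`. -/
def CFBegins (f : ℕ → P.K) (n : ℕ) (z : P.K) : Prop :=
  ∃ zs : ℕ → P.K, zs 0 = z ∧ (∀ i < n, P.CFStep f zs i) ∧
    f n ∈ P.Abar ∧ (zs n = f n ∨ 0 < P.ν (zs n - f n))

/-- `z` is the value of the continued fraction expression with coefficients `f`
and length `L` (finite or infinite); the coefficients are Puiseux polynomials of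
positive degree after the zeroth one. -/
def CFExprEval (f : ℕ → P.K) (L : WithTop ℕ) (z : P.K) : Prop :=
  f 0 ∈ P.Abar ∧
  (∀ i : ℕ, 1 ≤ i → (i : WithTop ℕ) ≤ L → f i ∈ P.Abar ∧ 0 < P.deg (f i)) ∧
  ((∃ N : ℕ, L = (N : WithTop ℕ) ∧ z = P.approx f N) ∨
    (L = ⊤ ∧ P.TendsTo (fun n => P.approx f n) z))

/-- The equivalence relation `(a, r) ~ (a', r')` iff `r = r'` and `ν (a - a') ≥ r`
(the pairs define the same Berkovich point `η_{a,r}` of type II or III). -/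
def ballEquiv (p q : P.K × ℝ) : Prop :=
  p.2 = q.2 ∧ (p.1 = q.1 ∨ p.2 ≤ (P.ν (p.1 - q.1) : ℝ))

open scoped Classical in
/-- The Berkovich hyperbolic distance, computed on representatives. -/
noncomputable def berkDist (p q : P.K × ℝ) : ℝ :=
  if p.1 = q.1 ∨ min p.2 q.2 ≤ (P.ν (p.1 - q.1) : ℝ) then |p.2 - q.2|
  else p.2 + q.2 - 2 * (P.ν (p.1 - q.1) : ℝ)

/-- The closed ball `B_a^{[r]} = {b : ν (b - a) ≥ r}` corresponding to `η_{a,r}`. -/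
def closedBall (a : P.K) (r : ℝ) : Set P.K :=
  {b : P.K | b = a ∨ r ≤ (P.ν (b - a) : ℝ)}

/-- The Moebius transformation associated to a `2 × 2` matrix. -/
def mob (g : Matrix (Fin 2) (Fin 2) P.K) (x : P.K) : P.K :=
  (g 0 0 * x + g 0 1) / (g 1 0 * x + g 1 1)

/-- The ring `A_M = E[t^{1/M}]`. -/
def AM (M : ℕ) : Subring P.K :=
  Subring.closure (Set.range P.emb ∪ {P.mono (1 / (M : ℚ))})

/-- The field `E(t^{1/M})`, whose `ν`-completion inside `K̂` is `K_M = E((t^{-1/M}))`. -/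
def kM (M : ℕ) : Subfield P.K :=
  Subfield.closure (Set.range P.emb ∪ {P.mono (1 / (M : ℚ))})

lemma nu_one : P.ν 1 = 0 := by
  have := P.ν_mono 0
  rwa [P.mono_zero, neg_zero] at this

lemma nu_neg (x : P.K) (hx : x ≠ 0) : P.ν (-x) = P.ν x := by
  have hm1 : (-1 : P.K) ≠ 0 := by norm_num
  have h1 : P.ν ((-1 : P.K) * (-1)) = P.ν (-1 : P.K) + P.ν (-1 : P.K) :=
    P.ν_mul _ _ hm1 hm1
  rw [neg_mul_neg, one_mul, P.nu_one] at h1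
  have h2 : P.ν (-1 : P.K) = 0 := by linarith
  calc P.ν (-x) = P.ν ((-1) * x) := by rw [neg_one_mul]
    _ = P.ν (-1 : P.K) + P.ν x := P.ν_mul _ _ hm1 hx
    _ = P.ν x := by rw [h2, zero_add]

lemma nu_inv (x : P.K) (hx : x ≠ 0) : P.ν x⁻¹ = -P.ν x := by
  have := P.ν_mul x x⁻¹ hx (inv_ne_zero hx)
  rw [mul_inv_cancel₀ hx, P.nu_one] at this
  linarith

lemma nu_add_eq (x y : P.K) (hx : x ≠ 0) (hy : y ≠ 0) (h : P.ν x < P.ν y) :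
    x + y ≠ 0 ∧ P.ν (x + y) = P.ν x := by
  have hxy : x + y ≠ 0 := by
    intro h0
    have hyx : y = -x := eq_neg_of_add_eq_zero_right h0
    rw [hyx, P.nu_neg x hx] at h
    exact lt_irrefl _ h
  refine ⟨hxy, ?_⟩
  have h1 := P.ν_add x y hx hy hxy
  rw [min_eq_left h.le] at h1
  have h3 := P.ν_add (x + y) (-y) hxy (neg_ne_zero.mpr hy)
    (by rw [add_neg_cancel_right]; exact hx)
  rw [add_neg_cancel_right, P.nu_neg y hy] at h3
  rcases min_le_iff.mp h3 with h4 | h4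
  · exact le_antisymm h4 h1
  · linarith

/-- The continued fraction iteration starting from `z'` with prescribed coefficients. -/
def cfSeq (z' : P.K) (f : ℕ → P.K) : ℕ → P.K
  | 0 => z'
  | n + 1 => (cfSeq z' f n - f n)⁻¹

end PuiseuxCompletion

open PuiseuxCompletion in
/-- if `z_m` is defined and `ν (z - z') > 2 Σ_{i=1}^m deg f_i`, then
`z'_m` is defined and the continued fraction data of `z'` has the same
coefficients `f_i` for all `i ≤ m`. -/
theorem statement6 {E : Type u} [Field E] (P : PuiseuxCompletion E)
    (z z' : P.K) (f zs : ℕ → P.K) (m : ℕ)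
    (h0 : zs 0 = z) (hstep : ∀ i < m, P.CFStep f zs i)
    (hfm : f m ∈ P.Abar) (hcm : zs m = f m ∨ 0 < P.ν (zs m - f m))
    (hclose : z = z' ∨ 2 * ∑ i ∈ Finset.Icc 1 m, P.deg (f i) < P.ν (z - z')) :
    ∃ zs' : ℕ → P.K, zs' 0 = z' ∧ (∀ i < m, P.CFStep f zs' i) ∧
      (zs' m = f m ∨ 0 < P.ν (zs' m - f m)) := by
  by_cases hzz : z = z'
  · exact ⟨zs, by rw [h0, hzz], hstep, hcm⟩
  have hν := hclose.resolve_left hzz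
  set zs' : ℕ → P.K := P.cfSeq z' f with hzs'def
  have hz0 : zs' 0 = z' := rfl
  have hzsucc : ∀ i, zs' (i + 1) = (zs' i - f i)⁻¹ := fun i => by
    rw [hzs'def]; simp [PuiseuxCompletion.cfSeq]
  -- the degree of `f (j+1)` equals `ν (zs j - f j)`
  have keydeg : ∀ j < m, P.deg (f (j + 1)) = P.ν (zs j - f j) := by
    intro j hj
    obtain ⟨_, hν0, hzf, hrec⟩ := hstep j hj
    have ha : zs j - f j ≠ 0 := sub_ne_zero.mpr hzf
    have hz1 : zs (j + 1) ≠ 0 := by rw [hrec]; exact inv_ne_zero ha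
    have hνz1 : P.ν (zs (j + 1)) = -P.ν (zs j - f j) := by
      rw [hrec]; exact P.nu_inv _ ha
    have hcase : zs (j + 1) = f (j + 1) ∨ 0 < P.ν (zs (j + 1) - f (j + 1)) := by
      rcases Nat.lt_or_ge (j + 1) m with h | h
      · exact Or.inr (hstep (j + 1) h).2.1
      · have hm : m = j + 1 := by omega
        rw [hm] at hcm; exact hcm
    by_cases heq : zs (j + 1) = f (j + 1)
    · simp only [PuiseuxCompletion.deg, ← heq, hνz1, neg_neg]
    · rcases hcase with hc | hc
      · exact absurd hc heq
      have hd : zs (j + 1) - f (j + 1) ≠ 0 := sub_ne_zero.mpr heq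
      have hlt : P.ν (zs (j + 1)) < P.ν (-(zs (j + 1) - f (j + 1))) := by
        rw [P.nu_neg _ hd]; linarith
      have h2 := (P.nu_add_eq (zs (j + 1)) (-(zs (j + 1) - f (j + 1))) hz1
        (neg_ne_zero.mpr hd) hlt).2
      have hxy : zs (j + 1) + -(zs (j + 1) - f (j + 1)) = f (j + 1) := by ring
      rw [hxy] at h2
      simp only [PuiseuxCompletion.deg]
      linarith
  -- nonnegativity of the tail sums
  have Snn : ∀ k : ℕ, 0 ≤ ∑ j ∈ Finset.Icc (k + 1) m, P.deg (f j) := by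
    intro k
    apply Finset.sum_nonneg
    intro j hj
    rw [Finset.mem_Icc] at hj
    obtain ⟨l, rfl⟩ : ∃ l, j = l + 1 := ⟨j - 1, by omega⟩
    rw [keydeg l (by omega)]
    exact (hstep l (by omega)).2.1.le
  -- splitting off the head of the sums
  have hsum : ∀ i < m, ∑ j ∈ Finset.Icc (i + 1) m, P.deg (f j) =
      P.deg (f (i + 1)) + ∑ j ∈ Finset.Icc (i + 2) m, P.deg (f j) := by
    intro i hi
    rw [Finset.Icc_eq_cons_Ioc (by omega : i + 1 ≤ m), Finset.sum_cons,
      ← Finset.Icc_add_one_left_eq_Ioc]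
    rfl
  -- key deduction at an index `i < m`
  have mid : ∀ i < m, zs i ≠ zs' i →
      2 * (∑ j ∈ Finset.Icc (i + 1) m, P.deg (f j)) < P.ν (zs i - zs' i) →
      zs' i - f i ≠ 0 ∧ P.ν (zs' i - f i) = P.ν (zs i - f i) := by
    intro i hi hne hlt
    obtain ⟨_, hν0, hzf, _⟩ := hstep i hi
    have ha : zs i - f i ≠ 0 := sub_ne_zero.mpr hzf
    have hb : zs i - zs' i ≠ 0 := sub_ne_zero.mpr hne
    have hS := Snn (i + 1)
    rw [hsum i hi, keydeg i hi] at hlt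
    have hlt2 : P.ν (zs i - f i) < P.ν (-(zs i - zs' i)) := by
      rw [P.nu_neg _ hb]; linarith
    have h2 := P.nu_add_eq (zs i - f i) (-(zs i - zs' i)) ha (neg_ne_zero.mpr hb) hlt2
    have hxy : (zs i - f i) + -(zs i - zs' i) = zs' i - f i := by ring
    rw [hxy] at h2
    exact h2
  -- the main invariant
  have claim : ∀ i, i ≤ m → zs i ≠ zs' i ∧
      2 * (∑ j ∈ Finset.Icc (i + 1) m, P.deg (f j)) < P.ν (zs i - zs' i) := by
    intro i
    induction i with
    | zero =>
      intro _
      refine ⟨by rw [h0, hz0]; exact hzz, ?_⟩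
      rw [h0, hz0]
      simpa using hν
    | succ i ih =>
      intro hsm
      have hi : i < m := by omega
      obtain ⟨hne, hlt⟩ := ih (by omega)
      obtain ⟨hA, hν0, hzf, hrec⟩ := hstep i hi
      have ha : zs i - f i ≠ 0 := sub_ne_zero.mpr hzf
      have hb : zs i - zs' i ≠ 0 := sub_ne_zero.mpr hne
      obtain ⟨ha', hνeq⟩ := mid i hi hne hlt
      have hformula : zs (i + 1) - zs' (i + 1) =
          (zs' i - zs i) * ((zs i - f i)⁻¹ * (zs' i - f i)⁻¹) := by
        rw [hrec, hzsucc]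
        field_simp
        ring
      have hba : zs' i - zs i ≠ 0 := fun h => hne (sub_eq_zero.mp h).symm
      have hprod : (zs i - f i)⁻¹ * (zs' i - f i)⁻¹ ≠ 0 :=
        mul_ne_zero (inv_ne_zero ha) (inv_ne_zero ha')
      have hne2 : zs (i + 1) - zs' (i + 1) ≠ 0 := by
        rw [hformula]; exact mul_ne_zero hba hprod
      have hν1 : P.ν (zs (i + 1) - zs' (i + 1)) =
          P.ν (zs i - zs' i) - 2 * P.ν (zs i - f i) := by
        rw [hformula, P.ν_mul _ _ hba hprod,
          P.ν_mul _ _ (inv_ne_zero ha) (inv_ne_zero ha'),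
          P.nu_inv _ ha, P.nu_inv _ ha', hνeq]
        have : zs' i - zs i = -(zs i - zs' i) := by ring
        rw [this, P.nu_neg _ hb]
        ring
      rw [hsum i hi, keydeg i hi] at hlt
      refine ⟨sub_ne_zero.mp hne2, ?_⟩
      rw [hν1]
      linarith
  refine ⟨zs', hz0, ?_, ?_⟩
  · intro i hi
    obtain ⟨hA, hν0, hzf, hrec⟩ := hstep i hi
    obtain ⟨hne, hlt⟩ := claim i hi.le
    obtain ⟨hd, heq⟩ := mid i hi hne hlt
    refine ⟨hA, ?_, sub_ne_zero.mp hd, hzsucc i⟩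
    rw [heq]; exact hν0
  · obtain ⟨hne, hlt⟩ := claim m le_rfl
    have hb : zs m - zs' m ≠ 0 := sub_ne_zero.mpr hne
    have hS0 : ∑ j ∈ Finset.Icc (m + 1) m, P.deg (f j) = 0 := by
      rw [Finset.Icc_eq_empty (by omega), Finset.sum_empty]
    rw [hS0, mul_zero] at hlt
    by_cases heq2 : zs m = f m
    · right
      have hd : zs' m - f m = -(zs m - zs' m) := by rw [← heq2]; ring
      rw [hd, P.nu_neg _ hb]
      exact hlt
    · rcases hcm with hc | hc
      · exact absurd hc heq2
      by_cases heq : zs' m = f m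
      · exact Or.inl heq
      right
      have hx : zs m - f m ≠ 0 := sub_ne_zero.mpr heq2
      have hxy : (zs m - f m) + -(zs m - zs' m) = zs' m - f m := by ring
      have h4 := P.ν_add (zs m - f m) (-(zs m - zs' m)) hx (neg_ne_zero.mpr hb)
        (by rw [hxy]; exact sub_ne_zero.mpr heq)
      rw [hxy, P.nu_neg _ hb] at h4
      exact lt_of_lt_of_le (lt_min hc hlt) h4
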